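/- Let n, m be positive integers, P a symmetric n×n real matrix, F an n×n real matrix, G an n×m real matrix, Q a symmetric n×n real matrix, S an n×m real matrix, R a symmetric positive-definite m×m real matrix, and K an m×n real matrix. Then the identity zᵀ(FᵀP + PF + Q)z + 2zᵀ(PG + S)u + uᵀRu = (u − Kz)ᵀR(u − Kz) holds for all z ∈ ℝⁿ and u ∈ ℝᵐ if and only if FᵀP + PF + Q = (PG + S)R⁻¹(PG + S)ᵀ and K = −R⁻¹(PG + S)ᵀ. -/
import Mathlib
open Matrix

lemma dot_mv {n m : ℕ} (A : Matrix (Fin n) (Fin m) ℝ) (x : Fin m → ℝ) (y : Fin n → ℝ) :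
    (A *ᵥ x) ⬝ᵥ y = x ⬝ᵥ (Aᵀ *ᵥ y) := by
  rw [dotProduct_comm, Matrix.dotProduct_mulVec, dotProduct_comm, Matrix.mulVec_transpose]

lemma bilin_ext {n m : ℕ} (M N : Matrix (Fin n) (Fin m) ℝ)
    (h : ∀ z u, z ⬝ᵥ M *ᵥ u = z ⬝ᵥ N *ᵥ u) : M = N := by
  ext i j
  have := h (Pi.single i 1) (Pi.single j 1)
  simpa [Matrix.mulVec_single, single_dotProduct] using this

lemma quad_ext {n : ℕ} (M N : Matrix (Fin n) (Fin n) ℝ) (hM : M.IsSymm) (hN : N.IsSymm)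
    (h : ∀ z, z ⬝ᵥ M *ᵥ z = z ⬝ᵥ N *ᵥ z) : M = N := by
  ext i j
  have h1 := h (Pi.single i 1 + Pi.single j 1)
  have h2 := h (Pi.single i 1)
  have h3 := h (Pi.single j 1)
  have hMji : M j i = M i j := hM.apply i j
  have hNji : N j i = N i j := hN.apply i j
  simp [Matrix.mulVec_add, Matrix.mulVec_single, single_dotProduct,
    add_dotProduct, dotProduct_add] at h1 h2 h3
  linarith

theorem completing_the_square_lqr
    (n m : ℕ) (hn : 0 < n) (hm : 0 < m)
    (P F Q : Matrix (Fin n) (Fin n) ℝ)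
    (G S : Matrix (Fin n) (Fin m) ℝ)
    (R : Matrix (Fin m) (Fin m) ℝ)
    (K : Matrix (Fin m) (Fin n) ℝ)
    (hP : P.IsSymm) (hQ : Q.IsSymm) (hR : R.IsSymm) (hRpd : R.PosDef) :
    (∀ (z : Fin n → ℝ) (u : Fin m → ℝ),
        z ⬝ᵥ ((Fᵀ * P + P * F + Q).mulVec z)
          + 2 * (z ⬝ᵥ ((P * G + S).mulVec u))
          + u ⬝ᵥ (R.mulVec u)
        = (u - K.mulVec z) ⬝ᵥ (R.mulVec (u - K.mulVec z)))
      ↔ (Fᵀ * P + P * F + Q = (P * G + S) * R⁻¹ * (P * G + S)ᵀ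
          ∧ K = -(R⁻¹ * (P * G + S)ᵀ)) := by
  set A := Fᵀ * P + P * F + Q with hAdef
  set B := P * G + S with hBdef
  have hRdet : IsUnit R.det := isUnit_iff_ne_zero.mpr hRpd.det_pos.ne'
  have hRinvT : R⁻¹ᵀ = R⁻¹ := by rw [Matrix.transpose_nonsing_inv, hR.eq]
  have hAsymm : A.IsSymm := by
    unfold Matrix.IsSymm
    rw [hAdef]
    simp [Matrix.transpose_add, Matrix.transpose_mul, hP.eq, hQ.eq]
    exact add_comm _ _
  -- expansion of the RHS
  have expand : ∀ (z : Fin n → ℝ) (u : Fin m → ℝ),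
      (u - K *ᵥ z) ⬝ᵥ R *ᵥ (u - K *ᵥ z)
        = u ⬝ᵥ R *ᵥ u - 2 * (z ⬝ᵥ (Kᵀ * R) *ᵥ u) + z ⬝ᵥ (Kᵀ * R * K) *ᵥ z := by
    intro z u
    have e1 : (K *ᵥ z) ⬝ᵥ (R *ᵥ u) = z ⬝ᵥ (Kᵀ * R) *ᵥ u := by
      rw [dot_mv, Matrix.mulVec_mulVec]
    have e2 : u ⬝ᵥ (R *ᵥ (K *ᵥ z)) = z ⬝ᵥ (Kᵀ * R) *ᵥ u := by
      rw [Matrix.mulVec_mulVec, dotProduct_comm, dot_mv, Matrix.transpose_mul, hR.eq]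
    have e3 : (K *ᵥ z) ⬝ᵥ (R *ᵥ (K *ᵥ z)) = z ⬝ᵥ (Kᵀ * R * K) *ᵥ z := by
      rw [dot_mv, Matrix.mulVec_mulVec, Matrix.mulVec_mulVec]
    rw [Matrix.mulVec_sub, dotProduct_sub, sub_dotProduct, sub_dotProduct, e1, e2, e3]
    ring
  constructor
  · intro h
    -- quadratic part: A = Kᵀ * R * K
    have hquad : ∀ z : Fin n → ℝ, z ⬝ᵥ A *ᵥ z = z ⬝ᵥ (Kᵀ * R * K) *ᵥ z := by
      intro z
      have := h z 0
      rw [expand] at this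
      simpa using this
    have hKRKsymm : (Kᵀ * R * K).IsSymm := by
      unfold Matrix.IsSymm
      rw [Matrix.transpose_mul, Matrix.transpose_mul, Matrix.transpose_transpose,
        hR.eq, Matrix.mul_assoc]
    have hA : A = Kᵀ * R * K := quad_ext _ _ hAsymm hKRKsymm hquad
    -- cross part: B = -(Kᵀ * R)
    have hcross : ∀ (z : Fin n → ℝ) (u : Fin m → ℝ),
        z ⬝ᵥ B *ᵥ u = z ⬝ᵥ (-(Kᵀ * R)) *ᵥ u := by
      intro z u
      have h1 := h z u
      rw [expand] at h1
      have h2 := hquad z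
      rw [Matrix.neg_mulVec, dotProduct_neg]
      linarith
    have hB : B = -(Kᵀ * R) := bilin_ext _ _ hcross
    have hRK : R * K = -Bᵀ := by
      have := congrArg Matrix.transpose hB
      rw [Matrix.transpose_neg, Matrix.transpose_mul, Matrix.transpose_transpose] at this
      rw [← hR.eq]
      rw [this]
      rw [neg_neg, hR.eq]
    have hK : K = -(R⁻¹ * Bᵀ) := by
      have : R⁻¹ * (R * K) = R⁻¹ * (-Bᵀ) := by rw [hRK]
      rwa [← Matrix.mul_assoc, Matrix.nonsing_inv_mul R hRdet, Matrix.one_mul, Matrix.mul_neg] at this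
    have hKT : Kᵀ = -(B * R⁻¹) := by
      rw [hK, Matrix.transpose_neg, Matrix.transpose_mul, Matrix.transpose_transpose, hRinvT]
    have hKTR : Kᵀ * R = -B := by
      rw [hKT, Matrix.neg_mul, Matrix.mul_assoc, Matrix.nonsing_inv_mul R hRdet, Matrix.mul_one]
    refine ⟨?_, hK⟩
    rw [hA, hKTR, hK, Matrix.neg_mul, Matrix.mul_neg, neg_neg, ← Matrix.mul_assoc]
  · intro ⟨hA, hK⟩
    have hKT : Kᵀ = -(B * R⁻¹) := by
      rw [hK, Matrix.transpose_neg, Matrix.transpose_mul, Matrix.transpose_transpose, hRinvT]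
    have hKTR : Kᵀ * R = -B := by
      rw [hKT, Matrix.neg_mul, Matrix.mul_assoc, Matrix.nonsing_inv_mul R hRdet, Matrix.mul_one]
    have hKRK : Kᵀ * R * K = A := by
      rw [hKTR, hK, Matrix.neg_mul, Matrix.mul_neg, neg_neg, ← Matrix.mul_assoc, hA]
    intro z u
    rw [expand, hKRK, hKTR, Matrix.neg_mulVec, dotProduct_neg]
    ring
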